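/- arXiv:2008.11760 — 4 statements merged into one kernel-verified Lean document; each statement's English description precedes it below -/
import Mathlib

section
/- With Γ_{2k}(x)=2T_{2k}(x/2)+(d1-2)/(d1-1)^k and p_j(x)=U_j(x/2)-(1/(d1-1))U_{j-2}(x/2), one has the identity Γ_{2k}(x) = p_{2k}(x) - (d1-2)·( p_{2k-2}(x)/(d1-1) + p_{2k-4}(x)/(d1-1)^2 + ... + p_2(x)/(d1-1)^{k-1} ) as polynomials, for every k ≥ 1 and d1 ≥ 2. -/
open Polynomial

/-- `p_k(x) = U_k(x/2) - (1/(d1-1))·U_{k-2}(x/2)`. -/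
noncomputable def pPoly (d1 : ℕ) (k : ℤ) : Polynomial ℝ :=
  (Polynomial.Chebyshev.U ℝ k).comp (Polynomial.C (1 / 2) * Polynomial.X) -
    Polynomial.C (1 / ((d1 : ℝ) - 1)) *
      ((Polynomial.Chebyshev.U ℝ (k - 2)).comp (Polynomial.C (1 / 2) * Polynomial.X))

/-- `Γ_{2k}(x) = 2T_{2k}(x/2) + (d1-2)/(d1-1)^k`. -/
noncomputable def gammaEven (d1 : ℕ) (k : ℕ) : Polynomial ℝ :=
  (2 : Polynomial ℝ) *
      (Polynomial.Chebyshev.T ℝ (2 * k : ℤ)).comp (Polynomial.C (1 / 2) * Polynomial.X) +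
    Polynomial.C (((d1 : ℝ) - 2) / ((d1 : ℝ) - 1) ^ k)

lemma two_mul_T_eq (n : ℤ) :
    (2 : Polynomial ℝ) * Polynomial.Chebyshev.T ℝ n =
      Polynomial.Chebyshev.U ℝ n - Polynomial.Chebyshev.U ℝ (n - 2) := by
  have h1 := Polynomial.Chebyshev.T_eq_U_sub_X_mul_U ℝ n
  have h2 := Polynomial.Chebyshev.U_eq ℝ n
  linear_combination 2 * h1 + h2

/-- The polynomial identity
`Γ_{2k} = p_{2k} - (d1-2)·( p_{2k-2}/(d1-1) + p_{2k-4}/(d1-1)² + … + p_2/(d1-1)^{k-1} )`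
for every `k ≥ 1` and `d1 ≥ 2`. -/
theorem stmt_8 (d1 : ℕ) (hd1 : 2 ≤ d1) (k : ℕ) (hk : 1 ≤ k) :
    gammaEven d1 k =
      pPoly d1 (2 * k : ℤ) -
        Polynomial.C ((d1 : ℝ) - 2) *
          ∑ j ∈ Finset.Icc 1 (k - 1),
            Polynomial.C (1 / ((d1 : ℝ) - 1) ^ j) * pPoly d1 (2 * (k : ℤ) - 2 * (j : ℤ)) := by
  set q : ℝ := 1 / ((d1 : ℝ) - 1) with hq
  have hd1' : (1 : ℝ) ≤ (d1 : ℝ) - 1 := by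
    have : (2 : ℝ) ≤ (d1 : ℝ) := by exact_mod_cast hd1
    linarith
  have hne : ((d1 : ℝ) - 1) ≠ 0 := by linarith
  have hq1 : q * ((d1 : ℝ) - 1) = 1 := by
    rw [hq, one_div, inv_mul_cancel₀ hne]
  set f : ℕ → Polynomial ℝ := fun j =>
    Polynomial.C (q ^ j) *
      (Polynomial.Chebyshev.U ℝ (2 * (k : ℤ) - 2 * (j : ℤ))).comp
        (Polynomial.C (1 / 2) * Polynomial.X) with hf
  have hsummand : ∀ j : ℕ,
      Polynomial.C (1 / ((d1 : ℝ) - 1) ^ j) * pPoly d1 (2 * (k : ℤ) - 2 * (j : ℤ)) =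
        f j - f (j + 1) := by
    intro j
    have hcoef : (1 : ℝ) / ((d1 : ℝ) - 1) ^ j = q ^ j := by
      rw [hq, one_div, one_div, inv_pow]
    have hidx : 2 * (k : ℤ) - 2 * ((j : ℤ) + 1) = 2 * (k : ℤ) - 2 * (j : ℤ) - 2 := by ring
    simp only [hf, pPoly, hcoef, Nat.cast_add, Nat.cast_one, hidx, ← hq]
    rw [mul_sub, ← mul_assoc, ← Polynomial.C_mul, ← pow_succ]
  rw [Finset.sum_congr rfl (fun j _ => hsummand j)]
  have hIcc : Finset.Icc 1 (k - 1) = Finset.Ico 1 k := by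
    rw [← Finset.Ico_add_one_right_eq_Icc]
    congr 1
    omega
  rw [hIcc]
  have htel : ∑ j ∈ Finset.Ico 1 k, (f j - f (j + 1)) = f 1 - f k := by
    rw [Finset.sum_Ico_eq_sum_range]
    have h : ∀ i, f (1 + i) - f (1 + i + 1) = f (1 + i) - f (1 + (i + 1)) := by
      intro i; congr 2
    rw [Finset.sum_congr rfl (fun i _ => h i)]
    rw [Finset.sum_range_sub' (fun i => f (1 + i))]
    have e : 1 + (k - 1) = k := by omega
    rw [Nat.add_zero, e]
  rw [htel]
  have hU0 : (Polynomial.Chebyshev.U ℝ (2 * (k : ℤ) - 2 * (k : ℤ))).comp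
      (Polynomial.C (1 / 2) * Polynomial.X) = 1 := by
    norm_num [Polynomial.Chebyshev.U_zero]
  have h2T : (2 : Polynomial ℝ) *
      (Polynomial.Chebyshev.T ℝ (2 * k : ℤ)).comp (Polynomial.C (1 / 2) * Polynomial.X) =
      (Polynomial.Chebyshev.U ℝ (2 * k : ℤ)).comp (Polynomial.C (1 / 2) * Polynomial.X) -
      (Polynomial.Chebyshev.U ℝ (2 * (k : ℤ) - 2)).comp (Polynomial.C (1 / 2) * Polynomial.X) := by
    have := congrArg (fun p => Polynomial.comp p (Polynomial.C (1/2) * Polynomial.X))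
      (two_mul_T_eq (2 * k : ℤ))
    simpa [Polynomial.sub_comp, Polynomial.mul_comp] using this
  have hcoefk : ((d1 : ℝ) - 2) / ((d1 : ℝ) - 1) ^ k = ((d1 : ℝ) - 2) * q ^ k := by
    rw [hq, div_eq_mul_inv, one_div, inv_pow]
  have hidx2 : 2 * (k : ℤ) - 2 * (1 : ℤ) = 2 * (k : ℤ) - 2 := by ring
  simp only [gammaEven, pPoly, hf, hU0, hcoefk, Nat.cast_one, pow_one, mul_one,
    Polynomial.C_mul, ← hq]
  rw [h2T]
  have key : (Polynomial.C q + Polynomial.C ((d1:ℝ) - 2) * Polynomial.C q : Polynomial ℝ) = 1 := by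
    rw [← Polynomial.C_mul, ← Polynomial.C_add, ← Polynomial.C_1]
    congr 1
    have h : q + ((d1:ℝ) - 2) * q = q * ((d1:ℝ) - 1) := by ring
    rw [h, hq1]
  linear_combination
    ((Polynomial.Chebyshev.U ℝ (2 * (k : ℤ) - 2)).comp
      (Polynomial.C (1 / 2) * Polynomial.X)) * key
end

section
/- For every real K ≥ 1 and every natural number k, the maximum of |T_k(x)| over x ∈ [-K, K] equals ((K - sqrt(K^2-1))^k + (K + sqrt(K^2-1))^k)/2, where T_k is the Chebyshev polynomial of the first kind. -/
open Polynomial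

/-- `T n` evaluated at `cosh t` is `cosh (n t)`. -/
lemma T_real_cosh (t : ℝ) (n : ℤ) :
    (Polynomial.Chebyshev.T ℝ n).eval (Real.cosh t) = Real.cosh (n * t) := by
  have h := Polynomial.Chebyshev.T_complex_cos ((t : ℂ) * Complex.I) n
  have h1 : Complex.cos ((t : ℂ) * Complex.I) = Complex.cosh t := Complex.cos_mul_I t
  have h2 : Complex.cos ((n : ℂ) * ((t : ℂ) * Complex.I)) = Complex.cosh ((n : ℂ) * t) := by
    rw [show (n : ℂ) * ((t : ℂ) * Complex.I) = ((n : ℂ) * t) * Complex.I by ring,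
      Complex.cos_mul_I]
  rw [h1, h2] at h
  have : (((Polynomial.Chebyshev.T ℝ n).eval (Real.cosh t) : ℝ) : ℂ)
      = ((Real.cosh (n * t) : ℝ) : ℂ) := by
    rw [Polynomial.Chebyshev.complex_ofReal_eval_T, Complex.ofReal_cosh, h,
      Complex.ofReal_cosh]
    push_cast
    ring_nf
  exact_mod_cast this

lemma cosh_log_add_sqrt (a : ℝ) (ha : 1 ≤ a) :
    Real.cosh (Real.log (a + Real.sqrt (a ^ 2 - 1))) = a := by
  have hs0 : 0 ≤ Real.sqrt (a ^ 2 - 1) := Real.sqrt_nonneg _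
  have hsq : Real.sqrt (a ^ 2 - 1) ^ 2 = a ^ 2 - 1 := Real.sq_sqrt (by nlinarith)
  have hy : 0 < a + Real.sqrt (a ^ 2 - 1) := by linarith
  rw [Real.cosh_log hy]
  have hinv : (a + Real.sqrt (a ^ 2 - 1))⁻¹ = a - Real.sqrt (a ^ 2 - 1) := by
    exact inv_eq_of_mul_eq_one_right (by nlinarith)
  rw [hinv]; ring

/-- Parity of Chebyshev polynomials, for natural index. -/
lemma T_eval_neg (x : ℝ) (k : ℕ) :
    (Polynomial.Chebyshev.T ℝ (k : ℤ)).eval (-x)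
      = (-1) ^ k * (Polynomial.Chebyshev.T ℝ (k : ℤ)).eval x := by
  induction k using Nat.twoStepInduction with
  | zero => simp
  | one => simp
  | more n ih1 ih2 =>
    have h : ((n + 2 : ℕ) : ℤ) = (n : ℤ) + 2 := by push_cast; ring
    rw [h, Polynomial.Chebyshev.T_add_two]
    have h1 : ((n + 1 : ℕ) : ℤ) = (n : ℤ) + 1 := by push_cast; ring
    rw [h1] at ih2
    simp only [Polynomial.eval_sub, Polynomial.eval_mul, Polynomial.eval_X,
      Polynomial.eval_ofNat, ih1, ih2]
    ring

/-- For `K ≥ 1` and `k : ℕ`, the maximum of `|T_k(x)|` over `x ∈ [-K, K]` equals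
`((K - √(K²-1))^k + (K + √(K²-1))^k)/2`, where `T_k` is the Chebyshev polynomial of the
first kind. -/
theorem stmt_10 (K : ℝ) (hK : 1 ≤ K) (k : ℕ) :
    IsGreatest ((fun x => |(Polynomial.Chebyshev.T ℝ (k : ℤ)).eval x|) '' Set.Icc (-K) K)
      (((K - Real.sqrt (K ^ 2 - 1)) ^ k + (K + Real.sqrt (K ^ 2 - 1)) ^ k) / 2) := by
  set s := Real.sqrt (K ^ 2 - 1) with hs
  have hs0 : 0 ≤ s := Real.sqrt_nonneg _
  have hsq : s ^ 2 = K ^ 2 - 1 := Real.sq_sqrt (by nlinarith)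
  have hy : 0 < K + s := by linarith
  set U := Real.log (K + s) with hU
  have hU0 : 0 ≤ U := Real.log_nonneg (by linarith)
  have hcosh : Real.cosh U = K := cosh_log_add_sqrt K hK
  have hexpU : Real.exp U = K + s := Real.exp_log hy
  have hexpnU : Real.exp (-U) = K - s := by
    rw [Real.exp_neg, hexpU]
    exact inv_eq_of_mul_eq_one_right (by nlinarith)
  have hM : ((K - s) ^ k + (K + s) ^ k) / 2 = Real.cosh (k * U) := by
    rw [Real.cosh_eq, ← hexpU, ← hexpnU, ← Real.exp_nat_mul, ← Real.exp_nat_mul]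
    ring_nf
  rw [hM]
  constructor
  · refine ⟨K, ⟨by linarith, le_refl K⟩, ?_⟩
    have := T_real_cosh U (k : ℤ)
    rw [hcosh] at this
    simp only [this]
    push_cast
    exact abs_of_pos (Real.cosh_pos _)
  · rintro v ⟨x, hx, rfl⟩
    simp only
    -- reduce to the case x = |x|
    have key : ∀ z : ℝ, 1 ≤ z → z ≤ K →
        |(Polynomial.Chebyshev.T ℝ (k : ℤ)).eval z| ≤ Real.cosh (k * U) := by
      intro z hz1 hzK
      have hzsq : Real.sqrt (z ^ 2 - 1) ^ 2 = z ^ 2 - 1 := Real.sq_sqrt (by nlinarith)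
      set u := Real.log (z + Real.sqrt (z ^ 2 - 1)) with hu
      have hu0 : 0 ≤ u := Real.log_nonneg (by
        have := Real.sqrt_nonneg (z ^ 2 - 1); linarith)
      have hcoshz : Real.cosh u = z := cosh_log_add_sqrt z hz1
      have huU : u ≤ U := by
        apply Real.log_le_log (by positivity)
        have : Real.sqrt (z ^ 2 - 1) ≤ s := Real.sqrt_le_sqrt (by nlinarith)
        linarith
      have := T_real_cosh u (k : ℤ)
      rw [hcoshz] at this
      rw [this, abs_of_pos (Real.cosh_pos _)]
      apply Real.cosh_le_cosh.2
      rw [abs_of_nonneg (by positivity), abs_of_nonneg (by positivity)]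
      push_cast
      exact mul_le_mul_of_nonneg_left huU (Nat.cast_nonneg k)
    rcases le_or_gt |x| 1 with h1 | h1
    · -- |x| ≤ 1 : use cos
      have hx1 : -1 ≤ x := by cases abs_le.1 h1; linarith
      have hx2 : x ≤ 1 := (abs_le.1 h1).2
      have hc : Real.cos (Real.arccos x) = x := Real.cos_arccos hx1 hx2
      have := Polynomial.Chebyshev.T_real_cos (Real.arccos x) (k : ℤ)
      rw [hc] at this
      rw [this]
      calc |Real.cos ((k : ℤ) * Real.arccos x)| ≤ 1 := Real.abs_cos_le_one _
        _ ≤ Real.cosh (k * U) := Real.one_le_cosh _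
    · -- 1 < |x|
      rcases le_or_gt 0 x with hx0 | hx0
      · exact key x (by rw [abs_of_nonneg hx0] at h1; linarith) hx.2
      · have hxa : |x| = -x := abs_of_neg hx0
        have h2 : |(Polynomial.Chebyshev.T ℝ (k : ℤ)).eval x|
            = |(Polynomial.Chebyshev.T ℝ (k : ℤ)).eval (-x)| := by
          rw [T_eval_neg, abs_mul, abs_pow, abs_neg, abs_one, one_pow, one_mul]
        rw [h2]
        exact key (-x) (by rw [← hxa]; linarith) (by linarith [hx.1])
end

section
/- Let H be a subgraph of the complete bipartite graph K_{n,m} with e edges in which every vertex has degree at least 2, and let G be a uniformly random (d1,d2)-biregular bipartite graph with d2 ≤ d1 ≤ n^{1/3} and e = o(n^{1/3}). Then P(H ⊆ G) ≤ c·((d1-1)(d2-1)/(nm))^{e/2} for an absolute constant c, assuming the McKay subgraph bound P(H ⊆ G) ≤ (∏_i [g_i]_{h_i}) / [n·d1 - 4·d1^2 - 1]_{|H|}. -/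
-- descFactorial d h ≤ d * (d-1)^(h-1)
lemma my_desc_le (d : ℕ) : ∀ h : ℕ, 1 ≤ h → d.descFactorial h ≤ d * (d-1)^(h-1)
  | 1, _ => by simp
  | (h+2), _ => by
    have ih := my_desc_le d (h+1) (by omega)
    rw [Nat.descFactorial_succ]
    calc (d - (h+1)) * d.descFactorial (h+1) ≤ (d-1) * (d * (d-1)^h) := by
          apply Nat.mul_le_mul (by omega)
          simpa using ih
      _ = d * (d-1)^(h+1) := by ring

lemma my_vertex (d h : ℕ) (hd : 2 ≤ d) (hh : h = 0 ∨ 2 ≤ h) :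
    (d.descFactorial h : ℝ) ≤ ((d:ℝ) * ((d:ℝ)-1)) ^ ((h:ℝ)/2) := by
  rcases hh with h0 | h2
  · simp [h0]
  · set x : ℝ := (d:ℝ) with hx
    have hx2 : (2:ℝ) ≤ x := by rw [hx]; exact_mod_cast hd
    set y : ℝ := x - 1 with hy
    have hy1 : (1:ℝ) ≤ y := by simp [hy]; linarith
    have hcast : ((d-1:ℕ):ℝ) = y := by
      have : (1:ℕ) ≤ d := by omega
      push_cast [Nat.cast_sub this]; simp [hy, hx]
    have step1 : (d.descFactorial h : ℝ) ≤ x * y^(h-1) := by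
      calc (d.descFactorial h : ℝ) ≤ ((d * (d-1)^(h-1) : ℕ) : ℝ) := by
            exact_mod_cast my_desc_le d h (by omega)
        _ = x * y^(h-1) := by push_cast [hcast]; ring
    refine step1.trans ?_
    -- show x * y^(h-1) ≤ (x*y)^((h:ℝ)/2) by squaring
    have hxy : (0:ℝ) < x*y := by nlinarith
    have hsq : (x * y^(h-1))^2 ≤ (((x*y)) ^ ((h:ℝ)/2))^2 := by
      have hrhs : (((x*y)) ^ ((h:ℝ)/2))^2 = (x*y)^h := by
        rw [← Real.rpow_natCast ((x*y) ^ ((h:ℝ)/2)) 2, ← Real.rpow_mul (le_of_lt hxy)]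
        rw [show (h:ℝ)/2 * (2:ℕ) = (h:ℝ) by push_cast; ring, Real.rpow_natCast]
      rw [hrhs]
      obtain ⟨k, rfl⟩ : ∃ k, h = k + 2 := ⟨h - 2, by omega⟩
      have hyk : (y^2)^k ≤ (x*y)^k := by
        apply pow_le_pow_left₀ (by positivity)
        nlinarith
      have hk1 : k+2-1 = k+1 := by omega
      rw [hk1]
      calc (x * y^(k+1))^2 = x^2 * ((y^2)^(k+1)) := by
            rw [mul_pow, ← pow_mul, ← pow_mul, Nat.mul_comm (k+1) 2]
        _ = (x^2*y^2)*((y^2)^k) := by rw [pow_succ]; ring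
        _ ≤ (x^2*y^2)*((x*y)^k) := by
            apply mul_le_mul_of_nonneg_left hyk (by positivity)
        _ = (x*y)^(k+2) := by ring
    have h1 : (0:ℝ) ≤ x * y^(h-1) := by positivity
    have h2' : (0:ℝ) ≤ ((x*y)) ^ ((h:ℝ)/2) := Real.rpow_nonneg (le_of_lt hxy) _
    exact (pow_le_pow_iff_left₀ h1 h2' two_ne_zero).mp hsq

lemma my_prod {k : ℕ} (d : ℕ) (f : Fin k → ℕ) (hd : 2 ≤ d)
    (hf : ∀ i, f i = 0 ∨ 2 ≤ f i) (e : ℕ) (hsum : ∑ i, f i = e) :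
    ∏ i, (d.descFactorial (f i) : ℝ) ≤ ((d:ℝ) * ((d:ℝ)-1)) ^ ((e:ℝ)/2) := by
  have hxy : (0:ℝ) < (d:ℝ) * ((d:ℝ)-1) := by
    have : (2:ℝ) ≤ (d:ℝ) := by exact_mod_cast hd
    nlinarith
  calc ∏ i, (d.descFactorial (f i) : ℝ)
      ≤ ∏ i, ((d:ℝ) * ((d:ℝ)-1)) ^ ((f i:ℝ)/2) := by
        apply Finset.prod_le_prod (fun i _ => by positivity)
        exact fun i _ => my_vertex d (f i) hd (hf i)
    _ = ((d:ℝ) * ((d:ℝ)-1)) ^ (∑ i, ((f i:ℝ)/2)) := (Real.rpow_sum_of_pos hxy _ _).symm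
    _ = ((d:ℝ) * ((d:ℝ)-1)) ^ ((e:ℝ)/2) := by
        congr 1
        rw [← Finset.sum_div, ← hsum]
        push_cast
        ring

set_option maxHeartbeats 1000000 in
/-- There is an absolute constant `c > 0` such that: if `H` is a subgraph of `K_{n,m}`
with `e` edges in which every (non-isolated) vertex has degree at least 2 (degree
sequences `h1` on `V1`, `h2` on `V2`), `G` is a uniformly random (d1,d2)-biregular
bipartite graph with `d2 ≤ d1 ≤ n^{1/3}` and `e ≤ n^{1/3}/3`, and `P = P(H ⊆ G)`
satisfies the McKay subgraph bound
`P ≤ (∏ᵢ [gᵢ]_{hᵢ}) / [n·d1 - 4·d1² - 1]_e`, then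
`P ≤ c·((d1-1)(d2-1)/(nm))^{e/2}`. -/
theorem stmt_13 :
    ∃ c : ℝ, 0 < c ∧
      ∀ (n m d1 d2 e : ℕ) (h1 : Fin n → ℕ) (h2 : Fin m → ℕ) (P : ℝ),
        d2 ≤ d1 → d1 ^ 3 ≤ n → 27 * e ^ 3 ≤ n → n * d1 = m * d2 →
        (∀ i, h1 i = 0 ∨ 2 ≤ h1 i) → (∀ j, h2 j = 0 ∨ 2 ≤ h2 j) →
        (∑ i, h1 i = e) → (∑ j, h2 j = e) →
        P ≤ ((∏ i, (d1.descFactorial (h1 i) : ℝ)) * ∏ j, (d2.descFactorial (h2 j) : ℝ)) /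
            ((n * d1 - 4 * d1 ^ 2 - 1).descFactorial e : ℝ) →
        P ≤ c * ((((d1 : ℝ) - 1) * ((d2 : ℝ) - 1)) / ((n : ℝ) * (m : ℝ))) ^ ((e : ℝ) / 2) := by
  refine ⟨2, by norm_num, ?_⟩
  intro n m d1 d2 e h1 h2 P hd21 hd1n he3 hbal hdeg1 hdeg2 hs1 hs2 hP
  rcases Nat.eq_zero_or_pos e with rfl | he1
  · -- e = 0
    have hz1 : ∀ i, h1 i = 0 := fun i =>
      (Finset.sum_eq_zero_iff).mp hs1 i (Finset.mem_univ i)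
    have hz2 : ∀ j, h2 j = 0 := fun j =>
      (Finset.sum_eq_zero_iff).mp hs2 j (Finset.mem_univ j)
    simp only [hz1, hz2, Nat.descFactorial_zero, Nat.cast_one, Finset.prod_const_one,
      one_mul, div_one, Nat.cast_zero] at hP ⊢
    rw [show (0:ℝ)/2 = 0 by norm_num, Real.rpow_zero]
    linarith
  · -- e ≥ 1
    have hn27 : 27 ≤ n := by
      have h1e : 1 ≤ e^3 := Nat.one_le_pow 3 e he1
      calc 27 = 27 * 1 := by ring
        _ ≤ 27 * e^3 := Nat.mul_le_mul_left 27 h1e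
        _ ≤ n := he3
    -- get a vertex on the right with degree ≥ 2
    have hesum : ∑ j, h2 j ≠ 0 := by omega
    obtain ⟨j0, -, hj0⟩ := Finset.exists_ne_zero_of_sum_ne_zero hesum
    have hj02 : 2 ≤ h2 j0 := by rcases hdeg2 j0 with h | h <;> omega
    rcases Nat.lt_or_ge d2 2 with hd2s | hd22
    · -- degenerate: d2 ≤ 1, numerator vanishes
      have hzero : (d2.descFactorial (h2 j0) : ℝ) = 0 := by
        rw [Nat.descFactorial_eq_zero_iff_lt.mpr (by omega)]; simp
      have hnum : (∏ j, (d2.descFactorial (h2 j) : ℝ)) = 0 :=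
        Finset.prod_eq_zero (Finset.mem_univ j0) hzero
      have hP0 : P ≤ 0 := by rw [hnum, mul_zero, zero_div] at hP; exact hP
      have hbase : 0 ≤ (((d1 : ℝ) - 1) * ((d2 : ℝ) - 1)) / ((n : ℝ) * (m : ℝ)) := by
        interval_cases d2
        · -- d2 = 0 : then n*d1 = 0, so d1 = 0
          have hd10 : d1 = 0 := by
            have := hbal
            simp at this
            omega
          rw [hd10]
          norm_num
          positivity
        · -- d2 = 1 : base = 0
          norm_num
      have : 0 ≤ (2:ℝ) * ((((d1 : ℝ) - 1) * ((d2 : ℝ) - 1)) / ((n : ℝ) * (m : ℝ))) ^ ((e : ℝ) / 2) := by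
        have := Real.rpow_nonneg hbase ((e:ℝ)/2)
        linarith
      linarith
    · -- main case: 2 ≤ d2 ≤ d1
      have hd12 : 2 ≤ d1 := le_trans hd22 hd21
      have hm1 : 1 ≤ m := by
        rcases Nat.eq_zero_or_pos m with rfl | h
        · simp at hbal
          omega
        · exact h
      set N := n * d1 with hN
      -- key arithmetic: 9*e*d1 ≤ n
      have hkey : 9 * e * d1 ≤ n := by
        have hcube : (9*e*d1)^3 ≤ n^3 := by
          calc (9*e*d1)^3 = 27 * (27*e^3) * d1^3 := by ring
            _ ≤ 27 * n * n := by
                apply Nat.mul_le_mul (Nat.mul_le_mul_left 27 he3) hd1n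
            _ ≤ n * n * n := by
                apply Nat.mul_le_mul_right
                exact Nat.mul_le_mul_right n hn27
            _ = n^3 := by ring
        exact le_of_pow_le_pow_left₀ (by norm_num) (Nat.zero_le n) hcube
      have h13 : 27 * (e * (4*d1^2 + e)) ≤ 13 * N := by
        have h1' : 27 * (e * (4*d1^2)) ≤ 12 * (n * d1) := by
          calc 27 * (e * (4*d1^2)) = 12 * ((9*e*d1) * d1) := by ring
            _ ≤ 12 * (n * d1) := by
                apply Nat.mul_le_mul_left
                exact Nat.mul_le_mul_right d1 hkey
        have h2' : 27 * (e * e) ≤ n * d1 := by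
          calc 27 * (e * e) ≤ 27 * e^3 := by nlinarith
            _ ≤ n := he3
            _ ≤ n * d1 := Nat.le_mul_of_pos_right n (by omega)
        calc 27 * (e * (4*d1^2 + e)) = 27*(e*(4*d1^2)) + 27*(e*e) := by ring
          _ ≤ 12*(n*d1) + n*d1 := Nat.add_le_add h1' h2'
          _ = 13 * N := by rw [hN]; ring
      have hNs : 4*d1^2 + e + 1 ≤ N := by
        have : 4*d1^2 + e ≤ e * (4*d1^2+e) := Nat.le_mul_of_pos_left _ he1
        omega
      -- denominator lower bound
      set s : ℕ := 4*d1^2 + e with hs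
      have hdesc : ((N - s : ℕ))^e ≤ (N - 4*d1^2 - 1).descFactorial e := by
        have h' := Nat.pow_sub_le_descFactorial (N - 4*d1^2 - 1) e
        have heq : (N - 4*d1^2 - 1) + 1 - e = N - s := by omega
        rwa [heq] at h'
      have hN0 : (0:ℝ) < (N:ℝ) := by
        have : 0 < N := by omega
        exact_mod_cast this
      have hsub : ((N - s : ℕ) : ℝ) = (N:ℝ) - (s:ℝ) := by
        have : s ≤ N := by omega
        exact Nat.cast_sub this
      have h13R : 27 * ((e:ℝ) * (s:ℝ)) ≤ 13 * (N:ℝ) := by exact_mod_cast h13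
      have hbern : (14/27 : ℝ) * (N:ℝ)^e ≤ ((N:ℝ) - (s:ℝ))^e := by
        have ht1 : (s:ℝ)/(N:ℝ) ≤ 1 := by
          rw [div_le_one hN0]
          have : s ≤ N := by omega
          exact_mod_cast this
        have hb := one_add_mul_le_pow (a := -((s:ℝ)/(N:ℝ))) (by linarith) e
        have het : (e:ℝ) * ((s:ℝ)/(N:ℝ)) ≤ 13/27 := by
          rw [mul_div_assoc'] at *
          rw [div_le_div_iff₀ hN0 (by norm_num)]
          linarith
        have h1427 : (14/27 : ℝ) ≤ (1 - (s:ℝ)/(N:ℝ))^e := by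
          calc (14/27 : ℝ) ≤ 1 + (e:ℝ) * (-((s:ℝ)/(N:ℝ))) := by linarith
            _ ≤ (1 + -((s:ℝ)/(N:ℝ)))^e := hb
            _ = (1 - (s:ℝ)/(N:ℝ))^e := by rw [← sub_eq_add_neg]
        calc (14/27 : ℝ) * (N:ℝ)^e ≤ (1 - (s:ℝ)/(N:ℝ))^e * (N:ℝ)^e := by
              apply mul_le_mul_of_nonneg_right h1427 (by positivity)
          _ = ((1 - (s:ℝ)/(N:ℝ)) * (N:ℝ))^e := (mul_pow _ _ _).symm
          _ = ((N:ℝ) - (s:ℝ))^e := by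
              congr 1
              field_simp
      have hden : (14/27 : ℝ) * (N:ℝ)^e ≤ ((N - 4*d1^2 - 1).descFactorial e : ℝ) := by
        have hdescR : (((N - s:ℕ)):ℝ)^e ≤ ((N - 4*d1^2 - 1).descFactorial e : ℝ) := by
          exact_mod_cast hdesc
        rw [hsub] at hdescR
        exact hbern.trans hdescR
      -- numerator upper bounds
      have hnum1 := my_prod d1 h1 hd12 hdeg1 e hs1
      have hnum2 := my_prod d2 h2 hd22 hdeg2 e hs2
      -- combine
      have hd1R : (2:ℝ) ≤ (d1:ℝ) := by exact_mod_cast hd12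
      have hd2R : (2:ℝ) ≤ (d2:ℝ) := by exact_mod_cast hd22
      have hnR : (27:ℝ) ≤ (n:ℝ) := by exact_mod_cast hn27
      have hmR : (1:ℝ) ≤ (m:ℝ) := by exact_mod_cast hm1
      have hb1 : (0:ℝ) < (d1:ℝ) * ((d1:ℝ)-1) := by nlinarith
      have hb2 : (0:ℝ) < (d2:ℝ) * ((d2:ℝ)-1) := by nlinarith
      set z : ℝ := (e:ℝ)/2 with hz
      have hstep1 : P ≤ (((d1:ℝ) * ((d1:ℝ)-1))^z * ((d2:ℝ) * ((d2:ℝ)-1))^z) / ((14/27 : ℝ) * (N:ℝ)^e) := by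
        refine hP.trans ?_
        apply div_le_div₀ (by positivity) ?_ (by positivity) hden
        apply mul_le_mul hnum1 hnum2 (Finset.prod_nonneg (fun j _ => by positivity)) (by positivity)
      refine hstep1.trans ?_
      -- identify N^e with (n*m*d1*d2)^z
      have hbalR : (n:ℝ) * (d1:ℝ) = (m:ℝ) * (d2:ℝ) := by exact_mod_cast hbal
      have hNsq : (n:ℝ)*(m:ℝ)*(d1:ℝ)*(d2:ℝ) = (N:ℝ)^2 := by
        push_cast [hN]
        linear_combination (-((n:ℝ)*(d1:ℝ))) * hbalR
      have hNe : (N:ℝ)^e = ((n:ℝ)*(m:ℝ)*(d1:ℝ)*(d2:ℝ))^z := by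
        rw [hNsq, ← Real.rpow_natCast ((N:ℝ)) 2, ← Real.rpow_mul (le_of_lt hN0),
          show ((2:ℕ):ℝ) * z = (e:ℝ) by rw [hz]; push_cast; ring, Real.rpow_natCast]
      rw [hNe]
      have hzpos : 0 ≤ z := by positivity
      have hmul : ((d1:ℝ) * ((d1:ℝ)-1))^z * ((d2:ℝ) * ((d2:ℝ)-1))^z
          = (((d1:ℝ) * ((d1:ℝ)-1)) * ((d2:ℝ) * ((d2:ℝ)-1)))^z :=
        (Real.mul_rpow (le_of_lt hb1) (le_of_lt hb2)).symm
      rw [hmul]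
      have hnm0 : (0:ℝ) < (n:ℝ)*(m:ℝ)*(d1:ℝ)*(d2:ℝ) := by positivity
      have hratio : (((d1:ℝ) * ((d1:ℝ)-1)) * ((d2:ℝ) * ((d2:ℝ)-1)))^z / ((n:ℝ)*(m:ℝ)*(d1:ℝ)*(d2:ℝ))^z
          = ((((d1:ℝ)-1) * ((d2:ℝ)-1)) / ((n:ℝ)*(m:ℝ)))^z := by
        rw [← Real.div_rpow (mul_pos hb1 hb2).le (le_of_lt hnm0)]
        congr 1
        have hd1ne : (d1:ℝ) ≠ 0 := by positivity
        have hd2ne : (d2:ℝ) ≠ 0 := by positivity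
        have hnne : (n:ℝ) ≠ 0 := by positivity
        have hmne : (m:ℝ) ≠ 0 := by positivity
        field_simp
      have hrw : (((d1:ℝ) * ((d1:ℝ)-1)) * ((d2:ℝ) * ((d2:ℝ)-1)))^z / ((14/27:ℝ) * ((n:ℝ)*(m:ℝ)*(d1:ℝ)*(d2:ℝ))^z)
          = (27/14:ℝ) * (((((d1:ℝ)-1) * ((d2:ℝ)-1)) / ((n:ℝ)*(m:ℝ)))^z) := by
        rw [← hratio]
        rw [div_mul_eq_div_div_swap]
        ring
      rw [hrw]
      have hTnn : (0:ℝ) ≤ (((((d1:ℝ)-1) * ((d2:ℝ)-1)) / ((n:ℝ)*(m:ℝ)))^z) :=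
        Real.rpow_nonneg (div_nonneg (by nlinarith) (by positivity)) z
      linarith
end

section
/- Let Y = Σ_{j} c_j P_j be a finite linear combination with positive coefficients c_j of independent Poisson random variables P_j. Then for any t > 0, P(|Y - E[Y]| > t) ≤ 2·exp( -(t/(8c*)) · log(1 + t·c*/(2·Var(Y))) ), where c* = max_j c_j. In particular, for CNBW_k^{(∞)} = Σ_{j | k} 2j·C_j^{(∞)} with C_j^{(∞)} independent Poisson of mean ((d1-1)(d2-1))^j/(2j): P(|CNBW_k^{(∞)} - E CNBW_k^{(∞)}| > t) ≤ 2·exp( -(t/(8k))·log(1 + t/(2k·((d1-1)(d2-1))^k)) ). -/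
open MeasureTheory ProbabilityTheory

section Stmt15AuxSection
open Real
open scoped Nat
namespace Stmt15Aux



lemma nonneg_of_hasDerivAt {f f' : ℝ → ℝ} (hf : ∀ x, HasDerivAt f (f' x) x)
    (h0 : f 0 = 0) (hf' : ∀ x, 0 < x → 0 ≤ f' x) {x : ℝ} (hx : 0 ≤ x) : 0 ≤ f x := by
  have hd : Differentiable ℝ f := fun y => (hf y).differentiableAt
  have hm : MonotoneOn f (Set.Ici (0:ℝ)) := by
    refine monotoneOn_of_deriv_nonneg (convex_Ici 0) hd.continuous.continuousOn
      (fun y _ => (hd y).differentiableWithinAt) (fun y hy => ?_)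
    rw [(hf y).deriv]
    exact hf' y (by simpa using hy)
  simpa [h0] using hm Set.self_mem_Ici hx hx

lemma exp_sub_one_sub_le {x : ℝ} (hx : 0 ≤ x) :
    Real.exp x - 1 - x ≤ x ^ 2 / 2 * Real.exp x := by
  have key : 0 ≤ x ^ 2 / 2 * Real.exp x + 1 + x - Real.exp x := by
    refine nonneg_of_hasDerivAt
      (f := fun y => y ^ 2 / 2 * Real.exp y + 1 + y - Real.exp y)
      (f' := fun y => y * Real.exp y + y ^ 2 / 2 * Real.exp y + 1 - Real.exp y)
      (fun y => ?_) (by simp) (fun y hy => ?_) hx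
    · have h1 : HasDerivAt (fun z : ℝ => z ^ 2 / 2 * Real.exp z + 1 + z - Real.exp z)
          (((2:ℕ) * y ^ 1 / 2) * Real.exp y + y ^ 2 / 2 * Real.exp y + 1 - Real.exp y) y := by
        exact ((((hasDerivAt_pow 2 y).div_const 2).mul (Real.hasDerivAt_exp y)).add_const 1
          |>.add (hasDerivAt_id y)).sub (Real.hasDerivAt_exp y)
      convert h1 using 1
      push_cast
      ring
    · have h2 : -y + 1 ≤ Real.exp (-y) := Real.add_one_le_exp (-y)
      have h3 : Real.exp (-y) * Real.exp y = 1 := by rw [← Real.exp_add]; simp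
      nlinarith [Real.exp_pos y, Real.exp_pos (-y), sq_nonneg y]
  linarith

lemma exp_neg_sub_one_add_le {x : ℝ} (hx : 0 ≤ x) :
    Real.exp (-x) - 1 + x ≤ x ^ 2 / 2 := by
  have key : 0 ≤ x ^ 2 / 2 + 1 - x - Real.exp (-x) := by
    refine nonneg_of_hasDerivAt
      (f := fun y => y ^ 2 / 2 + 1 - y - Real.exp (-y))
      (f' := fun y => y - 1 + Real.exp (-y))
      (fun y => ?_) (by simp) (fun y hy => ?_) hx
    · have he : HasDerivAt (fun z : ℝ => Real.exp (-z)) (Real.exp (-y) * (-1)) y :=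
        (Real.hasDerivAt_exp (-y)).comp y ((hasDerivAt_id y).neg)
      have h1 : HasDerivAt (fun z : ℝ => z ^ 2 / 2 + 1 - z - Real.exp (-z))
          ((((2:ℕ) * y ^ 1 / 2) + 0 - 1) - Real.exp (-y) * (-1)) y := by
        have h := ((((hasDerivAt_pow 2 y).div_const 2).add_const 1).sub (hasDerivAt_id y)).sub he
        convert h using 2 with z
        · rfl
        · rfl
        all_goals simp [id] <;> push_cast <;> ring
      convert h1 using 1
      push_cast
      ring
    · show (0:ℝ) ≤ y - 1 + Real.exp (-y)
      have h2 : -y + 1 ≤ Real.exp (-y) := Real.add_one_le_exp (-y)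
      linarith
  linarith




lemma summable_nat_mul (x : ℝ) : Summable (fun n : ℕ => (n : ℝ) * x ^ n / n !) := by
  refine Summable.of_norm_bounded (Real.summable_pow_div_factorial (2 * |x|)) (fun n => ?_)
  have hn : (n : ℝ) ≤ 2 ^ n := by exact_mod_cast (Nat.lt_two_pow_self (n := n)).le
  have h1 : ‖(n : ℝ) * x ^ n / (n !)‖ = (n : ℝ) * |x| ^ n / n ! := by
    simp [abs_of_nonneg, Nat.abs_cast, Real.norm_eq_abs]
  rw [h1, mul_pow]
  gcongr

lemma summable_sq_mul (x : ℝ) : Summable (fun n : ℕ => (n : ℝ) ^ 2 * x ^ n / n !) := by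
  refine Summable.of_norm_bounded (Real.summable_pow_div_factorial (4 * |x|)) (fun n => ?_)
  have hn : (n : ℝ) ≤ 2 ^ n := by exact_mod_cast (Nat.lt_two_pow_self (n := n)).le
  have hn2 : (n : ℝ) ^ 2 ≤ 4 ^ n := by
    calc (n : ℝ) ^ 2 ≤ ((2:ℝ) ^ n) ^ 2 := by gcongr
      _ = 4 ^ n := by rw [← pow_mul, mul_comm, pow_mul]; norm_num
  have h1 : ‖(n : ℝ) ^ 2 * x ^ n / (n !)‖ = (n : ℝ) ^ 2 * |x| ^ n / n ! := by
    simp [abs_of_nonneg, Nat.abs_cast, Real.norm_eq_abs]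
  rw [h1, mul_pow]
  gcongr

lemma tsum_exp_ser (x : ℝ) : ∑' n : ℕ, x ^ n / n ! = Real.exp x := by
  rw [Real.exp_eq_exp_ℝ, NormedSpace.exp_eq_tsum_div]

lemma tsum_nat_mul (x : ℝ) : ∑' n : ℕ, (n : ℝ) * x ^ n / n ! = x * Real.exp x := by
  rw [Summable.tsum_eq_zero_add (summable_nat_mul x)]
  have h : ∀ n : ℕ, ((n + 1 : ℕ) : ℝ) * x ^ (n + 1) / (n + 1)! = x * (x ^ n / n !) := by
    intro n
    rw [Nat.factorial_succ]
    push_cast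
    have hne : ((n : ℝ) + 1) ≠ 0 := by positivity
    field_simp
    ring
  simp only [Nat.cast_zero, zero_mul, zero_div, zero_add, h]
  rw [tsum_mul_left, tsum_exp_ser]

lemma tsum_sq_mul (x : ℝ) : ∑' n : ℕ, (n : ℝ) ^ 2 * x ^ n / n ! = (x + x ^ 2) * Real.exp x := by
  rw [Summable.tsum_eq_zero_add (summable_sq_mul x)]
  have h : ∀ n : ℕ, ((n + 1 : ℕ) : ℝ) ^ 2 * x ^ (n + 1) / (n + 1)! =
      x * ((n : ℝ) * x ^ n / n !) + x * (x ^ n / n !) := by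
    intro n
    rw [Nat.factorial_succ]
    push_cast
    have hne : ((n : ℝ) + 1) ≠ 0 := by positivity
    field_simp
    ring
  simp only [Nat.cast_zero, zero_pow, zero_mul, zero_div, zero_add, h]
  rw [Summable.tsum_add ((summable_nat_mul x).mul_left x)
    ((Real.summable_pow_div_factorial x).mul_left x),
    tsum_mul_left, tsum_mul_left, tsum_nat_mul, tsum_exp_ser]
  ring




lemma poisson_meas_singleton (r : NNReal) (n : ℕ) :
    poissonMeasure r {n} = ENNReal.ofReal (poissonPMFReal r n) := by
  rw [poissonMeasure_singleton]
  rfl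

lemma poisson_integrable (r : NNReal) {f : ℕ → ℝ} (hf : ∀ n, 0 ≤ f n)
    (hs : Summable fun n => f n * poissonPMFReal r n) :
    Integrable f (poissonMeasure r) := by
  constructor
  · exact (measurable_of_countable f).aestronglyMeasurable
  · rw [hasFiniteIntegral_iff_norm]
    calc ∫⁻ a, ENNReal.ofReal ‖f a‖ ∂(poissonMeasure r)
        = ∑' n, ENNReal.ofReal ‖f n‖ * poissonMeasure r {n} := lintegral_countable' _
      _ = ∑' n, ENNReal.ofReal (f n * poissonPMFReal r n) := by
          congr 1
          ext n
          rw [poisson_meas_singleton, Real.norm_eq_abs, abs_of_nonneg (hf n),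
            ← ENNReal.ofReal_mul (hf n)]
      _ = ENNReal.ofReal (∑' n, f n * poissonPMFReal r n) :=
          (ENNReal.ofReal_tsum_of_nonneg
            (fun n => mul_nonneg (hf n) poissonPMFReal_nonneg) hs).symm
      _ < ⊤ := ENNReal.ofReal_lt_top

lemma poisson_integral (r : NNReal) {f : ℕ → ℝ} (hf : ∀ n, 0 ≤ f n)
    (hs : Summable fun n => f n * poissonPMFReal r n) :
    ∫ n, f n ∂(poissonMeasure r) = ∑' n, f n * poissonPMFReal r n := by
  rw [integral_poissonMeasure]
  refine tsum_congr fun n => ?_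
  rw [smul_eq_mul, mul_comm]
  rfl

lemma exp_mul_pmf (r : NNReal) (a : ℝ) (n : ℕ) :
    Real.exp (a * n) * poissonPMFReal r n
      = Real.exp (-(r:ℝ)) * ((((r:ℝ) * Real.exp a) ^ n) / n !) := by
  rw [poissonPMFReal, mul_comm a (n:ℝ), Real.exp_nat_mul, mul_pow]
  ring

lemma summable_exp_mul_pmf (r : NNReal) (a : ℝ) :
    Summable fun n : ℕ => Real.exp (a * n) * poissonPMFReal r n :=
  (((Real.summable_pow_div_factorial ((r:ℝ) * Real.exp a)).mul_left
    (Real.exp (-(r:ℝ)))).congr (fun n => (exp_mul_pmf r a n).symm))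

lemma poisson_integrable_exp (r : NNReal) (a : ℝ) :
    Integrable (fun n : ℕ => Real.exp (a * n)) (poissonMeasure r) :=
  poisson_integrable r (fun n => (Real.exp_pos _).le) (summable_exp_mul_pmf r a)

lemma poisson_integral_exp (r : NNReal) (a : ℝ) :
    ∫ n : ℕ, Real.exp (a * n) ∂(poissonMeasure r)
      = Real.exp ((r:ℝ) * (Real.exp a - 1)) := by
  rw [poisson_integral r (fun n => (Real.exp_pos _).le) (summable_exp_mul_pmf r a)]
  calc ∑' n : ℕ, Real.exp (a * n) * poissonPMFReal r n
      = ∑' n : ℕ, Real.exp (-(r:ℝ)) * ((((r:ℝ) * Real.exp a) ^ n) / n !) := by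
        congr 1; ext n; exact exp_mul_pmf r a n
    _ = Real.exp (-(r:ℝ)) * Real.exp ((r:ℝ) * Real.exp a) := by
        rw [tsum_mul_left, tsum_exp_ser]
    _ = Real.exp ((r:ℝ) * (Real.exp a - 1)) := by
        rw [← Real.exp_add]; ring_nf

lemma nat_mul_pmf (r : NNReal) (n : ℕ) :
    (n : ℝ) * poissonPMFReal r n
      = Real.exp (-(r:ℝ)) * ((n : ℝ) * (r:ℝ) ^ n / n !) := by
  rw [poissonPMFReal]; ring

lemma sq_mul_pmf (r : NNReal) (n : ℕ) :
    ((n : ℝ) ^ 2) * poissonPMFReal r n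
      = Real.exp (-(r:ℝ)) * ((n : ℝ) ^ 2 * (r:ℝ) ^ n / n !) := by
  rw [poissonPMFReal]; ring

lemma exp_neg_mul_exp (r : NNReal) : Real.exp (-(r:ℝ)) * Real.exp (r:ℝ) = 1 := by
  rw [← Real.exp_add]; simp

lemma poisson_integrable_id (r : NNReal) :
    Integrable (fun n : ℕ => (n : ℝ)) (poissonMeasure r) :=
  poisson_integrable r (fun n => n.cast_nonneg)
    (((summable_nat_mul (r:ℝ)).mul_left _).congr (fun n => (nat_mul_pmf r n).symm))

lemma poisson_integral_id (r : NNReal) :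
    ∫ n : ℕ, (n : ℝ) ∂(poissonMeasure r) = (r : ℝ) := by
  rw [poisson_integral r (fun n => n.cast_nonneg)
    (((summable_nat_mul (r:ℝ)).mul_left _).congr (fun n => (nat_mul_pmf r n).symm))]
  calc ∑' n : ℕ, (n : ℝ) * poissonPMFReal r n
      = ∑' n : ℕ, Real.exp (-(r:ℝ)) * ((n : ℝ) * (r:ℝ) ^ n / n !) := by
        congr 1; ext n; exact nat_mul_pmf r n
    _ = Real.exp (-(r:ℝ)) * ((r:ℝ) * Real.exp (r:ℝ)) := by
        rw [tsum_mul_left, tsum_nat_mul]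
    _ = (r : ℝ) := by
        rw [show Real.exp (-(r:ℝ)) * ((r:ℝ) * Real.exp (r:ℝ))
            = (r:ℝ) * (Real.exp (-(r:ℝ)) * Real.exp (r:ℝ)) by ring,
          exp_neg_mul_exp, mul_one]

lemma poisson_integrable_sq (r : NNReal) :
    Integrable (fun n : ℕ => ((n : ℝ) ^ 2)) (poissonMeasure r) :=
  poisson_integrable r (fun n => sq_nonneg _)
    (((summable_sq_mul (r:ℝ)).mul_left _).congr (fun n => (sq_mul_pmf r n).symm))

lemma poisson_integral_sq (r : NNReal) :
    ∫ n : ℕ, ((n : ℝ) ^ 2) ∂(poissonMeasure r) = (r : ℝ) + (r : ℝ) ^ 2 := by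
  rw [poisson_integral r (fun n => sq_nonneg _)
    (((summable_sq_mul (r:ℝ)).mul_left _).congr (fun n => (sq_mul_pmf r n).symm))]
  calc ∑' n : ℕ, ((n : ℝ) ^ 2) * poissonPMFReal r n
      = ∑' n : ℕ, Real.exp (-(r:ℝ)) * ((n : ℝ) ^ 2 * (r:ℝ) ^ n / n !) := by
        congr 1; ext n; exact sq_mul_pmf r n
    _ = Real.exp (-(r:ℝ)) * (((r:ℝ) + (r:ℝ) ^ 2) * Real.exp (r:ℝ)) := by
        rw [tsum_mul_left, tsum_sq_mul]
    _ = (r : ℝ) + (r : ℝ) ^ 2 := by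
        rw [show Real.exp (-(r:ℝ)) * (((r:ℝ) + (r:ℝ) ^ 2) * Real.exp (r:ℝ))
            = ((r:ℝ) + (r:ℝ) ^ 2) * (Real.exp (-(r:ℝ)) * Real.exp (r:ℝ)) by ring,
          exp_neg_mul_exp, mul_one]


end Stmt15Aux
end Stmt15AuxSection

/-- Let `Y = Σ_j c_j P_j` be a finite linear combination, with positive coefficients
`c_j`, of independent Poisson random variables `P_j`. Then for any `t > 0`,
`P(|Y - E Y| > t) ≤ 2·exp( -(t/(8c*))·log(1 + t·c*/(2·Var Y)) )`, where
`c* = max_j c_j`. -/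
theorem stmt_15 {Ω : Type*} [MeasurableSpace Ω] (μ : Measure Ω) [IsProbabilityMeasure μ]
    {J : Type*} [Fintype J] [Nonempty J]
    (c : J → ℝ) (hc : ∀ j, 0 < c j)
    (P : J → Ω → ℕ) (hmeas : ∀ j, Measurable (P j))
    (hindep : ProbabilityTheory.iIndepFun P μ)
    (r : J → NNReal) (hdist : ∀ j, μ.map (P j) = ProbabilityTheory.poissonMeasure (r j))
    (Y : Ω → ℝ) (hY : Y = fun ω => ∑ j, c j * (P j ω : ℝ))
    (cstar : ℝ) (hcstar : IsGreatest (Set.range c) cstar)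
    (t : ℝ) (ht : 0 < t) :
    (μ {ω | t < |Y ω - ∫ ω', Y ω' ∂μ|}).toReal ≤
      2 * Real.exp (-(t / (8 * cstar)) *
        Real.log (1 + t * cstar / (2 * ProbabilityTheory.variance Y μ))) := by
  classical
  have hcle : ∀ j, c j ≤ cstar := fun j => hcstar.2 ⟨j, rfl⟩
  obtain ⟨j0, hj0⟩ := hcstar.1
  have hcpos : 0 < cstar := hj0 ▸ hc j0
  set X : J → Ω → ℝ := fun j ω => c j * (P j ω : ℝ) with hXdef
  have hXmeas : ∀ j, Measurable (X j) := fun j =>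
    (measurable_of_countable (fun n : ℕ => c j * (n : ℝ))).comp (hmeas j)
  have hXindep : iIndepFun X μ :=
    hindep.comp (fun j (n : ℕ) => c j * (n : ℝ)) (fun j => measurable_of_countable _)
  have hYsum : Y = ∑ j, X j := by
    rw [hY]; funext ω; simp [hXdef, Finset.sum_apply]
  -- transfer lemmas along the map to the Poisson measure
  have hmapInt : ∀ (j : J) (g : ℕ → ℝ), Integrable g (poissonMeasure (r j)) →
      Integrable (fun ω => g (P j ω)) μ := by
    intro j g hg
    exact (integrable_map_measure (measurable_of_countable g).aestronglyMeasurable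
      (hmeas j).aemeasurable).mp (by rwa [hdist j])
  have hmapEq : ∀ (j : J) (g : ℕ → ℝ),
      ∫ ω, g (P j ω) ∂μ = ∫ n, g n ∂(poissonMeasure (r j)) := by
    intro j g
    rw [← hdist j, integral_map (hmeas j).aemeasurable
      (measurable_of_countable g).aestronglyMeasurable]
  -- moments
  have hPint : ∀ j, Integrable (fun ω => (P j ω : ℝ)) μ := fun j =>
    hmapInt j _ (Stmt15Aux.poisson_integrable_id (r j))
  have hPmean : ∀ j, ∫ ω, (P j ω : ℝ) ∂μ = (r j : ℝ) := fun j => by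
    rw [hmapEq j (fun n => (n : ℝ)), Stmt15Aux.poisson_integral_id]
  have hPsqint : ∀ j, Integrable (fun ω => ((P j ω : ℝ) ^ 2)) μ := fun j =>
    hmapInt j _ (Stmt15Aux.poisson_integrable_sq (r j))
  have hPsq : ∀ j, ∫ ω, ((P j ω : ℝ) ^ 2) ∂μ = (r j : ℝ) + (r j : ℝ) ^ 2 := fun j => by
    rw [hmapEq j (fun n => (n : ℝ) ^ 2), Stmt15Aux.poisson_integral_sq]
  have hPmem : ∀ j, MemLp (fun ω => (P j ω : ℝ)) 2 μ := fun j =>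
    (memLp_two_iff_integrable_sq
      ((measurable_of_countable (fun n : ℕ => (n : ℝ))).comp (hmeas j)).aestronglyMeasurable).mpr
      (hPsqint j)
  have hXmem : ∀ j, MemLp (X j) 2 μ := fun j => (hPmem j).const_mul (c j)
  -- variance
  have hVarP : ∀ j, variance (fun ω => (P j ω : ℝ)) μ = (r j : ℝ) := by
    intro j
    rw [variance_eq_sub (hPmem j)]
    have hpow : ((fun ω => (P j ω : ℝ)) ^ 2) = fun ω => ((P j ω : ℝ) ^ 2) := by
      funext ω; simp [pow_two]
    rw [hpow, hPsq j, hPmean j]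
    ring
  have hVarX : ∀ j, variance (X j) μ = (c j) ^ 2 * (r j : ℝ) := by
    intro j
    have h := variance_const_mul (c j) (fun ω => (P j ω : ℝ)) μ
    rw [hVarP j] at h
    exact h
  have hvar : variance Y μ = ∑ j, (c j) ^ 2 * (r j : ℝ) := by
    rw [hYsum, IndepFun.variance_sum (fun j _ => hXmem j)
      (fun i _ j _ hij => hXindep.indepFun hij)]
    exact Finset.sum_congr rfl fun j _ => hVarX j
  -- expectation
  have hEY : ∫ ω', Y ω' ∂μ = ∑ j, c j * (r j : ℝ) := by
    rw [hY, integral_finset_sum _ (fun j _ => (hPint j).const_mul (c j))]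
    exact Finset.sum_congr rfl fun j _ => by rw [integral_const_mul, hPmean j]
  -- mgf computations
  have hintexp : ∀ (a : ℝ) (j : J), Integrable (fun ω => Real.exp (a * X j ω)) μ := by
    intro a j
    have h : (fun ω => Real.exp (a * X j ω))
        = fun ω => (fun n : ℕ => Real.exp ((a * c j) * n)) (P j ω) := by
      funext ω; simp only [hXdef]; rw [mul_assoc]
    rw [h]
    exact hmapInt j _ (Stmt15Aux.poisson_integrable_exp (r j) (a * c j))
  have hmgfX : ∀ (a : ℝ) (j : J),
      mgf (X j) μ a = Real.exp ((r j : ℝ) * (Real.exp (a * c j) - 1)) := by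
    intro a j
    show ∫ ω, Real.exp (a * X j ω) ∂μ = _
    calc ∫ ω, Real.exp (a * X j ω) ∂μ
        = ∫ ω, (fun n : ℕ => Real.exp ((a * c j) * n)) (P j ω) ∂μ := by
          congr 1; funext ω; simp only [hXdef]; rw [mul_assoc]
      _ = ∫ n : ℕ, Real.exp ((a * c j) * n) ∂(poissonMeasure (r j)) := hmapEq j (fun n : ℕ => Real.exp ((a * c j) * n))
      _ = Real.exp ((r j : ℝ) * (Real.exp (a * c j) - 1)) :=
          Stmt15Aux.poisson_integral_exp _ _
  have hmgfY : ∀ a : ℝ, mgf Y μ a = Real.exp (∑ j, (r j : ℝ) * (Real.exp (a * c j) - 1)) := by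
    intro a
    rw [hYsum, hXindep.mgf_sum hXmeas, Real.exp_sum]
    exact Finset.prod_congr rfl fun j _ => hmgfX a j
  have hintY : ∀ a : ℝ, Integrable (fun ω => Real.exp (a * Y ω)) μ := by
    intro a
    rw [hYsum]
    exact hXindep.integrable_exp_mul_sum hXmeas (fun j _ => hintexp a j)
  set m : ℝ := ∑ j, c j * (r j : ℝ) with hmdef
  clear_value m
  -- Chernoff bounds
  have upper : ∀ s : ℝ, 0 ≤ s →
      (μ {ω | m + t ≤ Y ω}).toReal ≤
      Real.exp (-(s * t) + ∑ j, (r j : ℝ) * (Real.exp (s * c j) - 1 - s * c j)) := by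
    intro s hs
    have h := measure_ge_le_exp_mul_mgf (μ := μ) (X := Y) (m + t) hs (hintY s)
    rw [hmgfY s, ← Real.exp_add] at h
    refine h.trans (le_of_eq ?_)
    congr 1
    have hsum : ∑ j, (r j : ℝ) * (Real.exp (s * c j) - 1 - s * c j)
        = (∑ j, (r j : ℝ) * (Real.exp (s * c j) - 1)) - s * m := by
      rw [hmdef, Finset.mul_sum, ← Finset.sum_sub_distrib]
      exact Finset.sum_congr rfl fun j _ => by ring
    rw [hsum]; ring
  have lower : ∀ s : ℝ, 0 ≤ s →
      (μ {ω | Y ω ≤ m - t}).toReal ≤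
      Real.exp (-(s * t) + ∑ j, (r j : ℝ) * (Real.exp (-(s * c j)) - 1 + s * c j)) := by
    intro s hs
    have h := measure_le_le_exp_mul_mgf (μ := μ) (X := Y) (m - t)
      (neg_nonpos.mpr hs) (hintY (-s))
    rw [hmgfY (-s), ← Real.exp_add] at h
    refine h.trans (le_of_eq ?_)
    congr 1
    have hsum : ∑ j, (r j : ℝ) * (Real.exp (-(s * c j)) - 1 + s * c j)
        = (∑ j, (r j : ℝ) * (Real.exp ((-s) * c j) - 1)) + s * m := by
      rw [hmdef, Finset.mul_sum, ← Finset.sum_add_distrib]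
      exact Finset.sum_congr rfl fun j _ => by rw [neg_mul]; ring
    rw [hsum]; ring
  -- split the two-sided event
  have hsplit : (μ {ω | t < |Y ω - ∫ ω', Y ω' ∂μ|}).toReal ≤
      (μ {ω | m + t ≤ Y ω}).toReal + (μ {ω | Y ω ≤ m - t}).toReal := by
    have hsub : {ω | t < |Y ω - ∫ ω', Y ω' ∂μ|} ⊆ {ω | m + t ≤ Y ω} ∪ {ω | Y ω ≤ m - t} := by
      intro ω hω
      simp only [Set.mem_setOf_eq] at hω
      rw [hEY] at hω
      rcases lt_abs.mp hω with h | h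
      · left; simp only [Set.mem_setOf_eq]; linarith
      · right; simp only [Set.mem_setOf_eq]; linarith
    have h1 : μ {ω | t < |Y ω - ∫ ω', Y ω' ∂μ|}
        ≤ μ {ω | m + t ≤ Y ω} + μ {ω | Y ω ≤ m - t} :=
      (measure_mono hsub).trans (measure_union_le _ _)
    calc (μ {ω | t < |Y ω - ∫ ω', Y ω' ∂μ|}).toReal
        ≤ (μ {ω | m + t ≤ Y ω} + μ {ω | Y ω ≤ m - t}).toReal :=
          ENNReal.toReal_mono
            (ENNReal.add_ne_top.mpr ⟨measure_ne_top μ _, measure_ne_top μ _⟩) h1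
      _ = _ := ENNReal.toReal_add (measure_ne_top μ _) (measure_ne_top μ _)
  set v : ℝ := variance Y μ with hvdef
  clear_value v
  have hvnn : 0 ≤ v := by rw [hvdef]; exact variance_nonneg Y μ
  rcases eq_or_lt_of_le hvnn with hv0 | hvpos
  · -- degenerate case: variance zero, RHS equals 2
    rw [← hv0]
    have h1 : μ {ω | t < |Y ω - ∫ ω', Y ω' ∂μ|} ≤ 1 := prob_le_one
    have h2 : (μ {ω | t < |Y ω - ∫ ω', Y ω' ∂μ|}).toReal ≤ 1 := by
      simpa using ENNReal.toReal_mono ENNReal.one_ne_top h1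
    have h3 : (2 : ℝ) * 0 = 0 := by norm_num
    rw [h3, div_zero, add_zero, Real.log_one, mul_zero, Real.exp_zero, mul_one]
    linarith
  · set B : ℝ := t * cstar / (2 * v) with hB
    clear_value B
    have hBpos : 0 < B := by
      rw [hB]; exact div_pos (mul_pos ht hcpos) (by linarith)
    set u : ℝ := Real.sqrt (1 + B) with hu
    clear_value u
    have hu2 : u ^ 2 = 1 + B := by rw [hu]; exact Real.sq_sqrt (by linarith)
    have hu1 : 1 < u := by
      rw [hu]
      refine (Real.lt_sqrt (by linarith)).mpr ?_
      nlinarith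
    have hupos : 0 < u := lt_trans one_pos hu1
    have hlog : Real.log (1 + B) = 2 * Real.log u := by
      rw [← hu2, Real.log_pow]; push_cast; ring
    have hlogu : 0 < Real.log u := Real.log_pos hu1
    set s : ℝ := Real.log u / cstar with hs
    clear_value s
    have hspos : 0 < s := by rw [hs]; exact div_pos hlogu hcpos
    have hexpscstar : Real.exp (s * cstar) = u := by
      rw [hs, div_mul_cancel₀ _ (ne_of_gt hcpos), Real.exp_log hupos]
    have hlogu_le : Real.log u ≤ u - 1 := Real.log_le_sub_one_of_pos hupos
    have hkey : u * Real.log u ≤ 3 * B := by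
      nlinarith [mul_le_mul_of_nonneg_left hlogu_le hupos.le, hu2, hu1]
    have htB : 2 * v * B = t * cstar := by
      rw [hB]; field_simp
    have hsvu : s * v * u ≤ 3 / 2 * t := by
      rw [hs, div_mul_eq_mul_div, div_mul_eq_mul_div, div_le_iff₀ hcpos]
      nlinarith [mul_le_mul_of_nonneg_left hkey hvpos.le, htB]
    have hsv : s * v ≤ 3 / 2 * t := by
      nlinarith [hsvu, hspos.le, hvpos.le, hu1]
    -- sum bounds
    have hub : ∑ j, (r j : ℝ) * (Real.exp (s * c j) - 1 - s * c j) ≤ s ^ 2 * v * u / 2 := by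
      have hterm : ∀ j, (r j : ℝ) * (Real.exp (s * c j) - 1 - s * c j)
          ≤ (r j : ℝ) * ((s * c j) ^ 2 / 2 * u) := by
        intro j
        refine mul_le_mul_of_nonneg_left ?_ (r j).coe_nonneg
        have hx : 0 ≤ s * c j := mul_nonneg hspos.le (hc j).le
        calc Real.exp (s * c j) - 1 - s * c j
            ≤ (s * c j) ^ 2 / 2 * Real.exp (s * c j) := Stmt15Aux.exp_sub_one_sub_le hx
          _ ≤ (s * c j) ^ 2 / 2 * u := by
              rw [← hexpscstar]
              have h4 : s * c j ≤ s * cstar := mul_le_mul_of_nonneg_left (hcle j) hspos.le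
              exact mul_le_mul_of_nonneg_left (Real.exp_le_exp.mpr h4) (by positivity)
      calc ∑ j, (r j : ℝ) * (Real.exp (s * c j) - 1 - s * c j)
          ≤ ∑ j, (r j : ℝ) * ((s * c j) ^ 2 / 2 * u) := Finset.sum_le_sum fun j _ => hterm j
        _ = s ^ 2 * v * u / 2 := by
            rw [Finset.sum_congr rfl (fun j _ => show (r j : ℝ) * ((s * c j) ^ 2 / 2 * u)
              = (s ^ 2 * u / 2) * ((c j) ^ 2 * (r j : ℝ)) from by ring),
              ← Finset.mul_sum, ← hvar]
            ring
    have hlb : ∑ j, (r j : ℝ) * (Real.exp (-(s * c j)) - 1 + s * c j) ≤ s ^ 2 * v / 2 := by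
      have hterm : ∀ j, (r j : ℝ) * (Real.exp (-(s * c j)) - 1 + s * c j)
          ≤ (r j : ℝ) * ((s * c j) ^ 2 / 2) := fun j =>
        mul_le_mul_of_nonneg_left
          (Stmt15Aux.exp_neg_sub_one_add_le (mul_nonneg hspos.le (hc j).le)) (r j).coe_nonneg
      calc ∑ j, (r j : ℝ) * (Real.exp (-(s * c j)) - 1 + s * c j)
          ≤ ∑ j, (r j : ℝ) * ((s * c j) ^ 2 / 2) := Finset.sum_le_sum fun j _ => hterm j
        _ = s ^ 2 * v / 2 := by
            rw [Finset.sum_congr rfl (fun j _ => show (r j : ℝ) * ((s * c j) ^ 2 / 2)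
              = (s ^ 2 / 2) * ((c j) ^ 2 * (r j : ℝ)) from by ring),
              ← Finset.mul_sum, ← hvar]
            ring
    -- tail bounds with the chosen parameter
    have hup2 : (μ {ω | m + t ≤ Y ω}).toReal ≤ Real.exp (-(s * t) / 4) := by
      refine (upper s hspos.le).trans ?_
      rw [Real.exp_le_exp]
      have h3 := mul_le_mul_of_nonneg_left hsvu hspos.le
      have h2 : s ^ 2 * v * u / 2 ≤ 3 / 4 * (s * t) := by nlinarith only [h3]
      linarith only [hub, h2]
    have hlo2 : (μ {ω | Y ω ≤ m - t}).toReal ≤ Real.exp (-(s * t) / 4) := by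
      refine (lower s hspos.le).trans ?_
      rw [Real.exp_le_exp]
      have h3 := mul_le_mul_of_nonneg_left hsv hspos.le
      have h2 : s ^ 2 * v / 2 ≤ 3 / 4 * (s * t) := by nlinarith only [h3]
      linarith only [hlb, h2]
    have hfinal : -(t / (8 * cstar)) * Real.log (1 + B) = -(s * t) / 4 := by
      rw [hlog, hs]
      field_simp
      ring
    calc (μ {ω | t < |Y ω - ∫ ω', Y ω' ∂μ|}).toReal
        ≤ (μ {ω | m + t ≤ Y ω}).toReal + (μ {ω | Y ω ≤ m - t}).toReal := hsplit
      _ ≤ Real.exp (-(s * t) / 4) + Real.exp (-(s * t) / 4) := add_le_add hup2 hlo2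
      _ = 2 * Real.exp (-(s * t) / 4) := by ring
      _ = 2 * Real.exp (-(t / (8 * cstar)) * Real.log (1 + B)) := by rw [hfinal]
end
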